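/- Under the assumptions of the previous monotonicity (x = rs a zero-energy solution with ṙ > 0 on (a,b], V ≥ V_min on the sphere, α* = (2−α)/2), if r(b) > r(a) then the action over [a,b] satisfies the two-sided bound: (√(2V_min)/α*) r(b)^{α*} − (1/α*) r(a) ṙ(a⁺) − (√(2V_min)/α*) r(a)^{2α*} / r(b)^{α*} ≤ A([a,b];x) ≤ (√(2V(s(b)))/α*) r(b)^{α*} − (1/α*) r(a) ṙ(a⁺). -/

import Mathlib

open Set intervalIntegral

set_option maxHeartbeats 1000000

theorem stmt_8 (α Vmin a b : ℝ) (hα : α ∈ Set.Ioo (0 : ℝ) 2) (hVmin : 0 < Vmin)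
    (hab : a < b)
    (r r' r'' q W : ℝ → ℝ)
    (hr : ∀ t ∈ Set.Icc a b, HasDerivAt r (r' t) t)
    (hr' : ∀ t ∈ Set.Icc a b, HasDerivAt r' (r'' t) t)
    (hrpos : ∀ t ∈ Set.Icc a b, 0 < r t)
    (hq : ∀ t ∈ Set.Icc a b, 0 ≤ q t)
    (hode : ∀ t ∈ Set.Icc a b,
      r'' t = -(α / 2) * (r' t) ^ 2 / r t + ((2 - α) / 2) * q t * r t)
    (henergy : ∀ t ∈ Set.Icc a b,
      (r' t) ^ 2 / 2 + (r t) ^ 2 * q t / 2 = W t / (r t) ^ α)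
    (hW : ∀ t ∈ Set.Icc a b, Vmin ≤ W t)
    (hr'pos : ∀ t ∈ Set.Ioc a b, 0 < r' t)
    (hr'a : 0 ≤ r' a)
    (hrab : r a < r b) :
    Real.sqrt (2 * Vmin) / ((2 - α) / 2) * (r b) ^ ((2 - α) / 2) -
        (1 / ((2 - α) / 2)) * (r a * r' a) -
        Real.sqrt (2 * Vmin) / ((2 - α) / 2) *
          ((r a) ^ (2 * ((2 - α) / 2)) / (r b) ^ ((2 - α) / 2)) ≤
      (∫ t in a..b, ((r' t) ^ 2 / 2 + (r t) ^ 2 * q t / 2 + W t / (r t) ^ α)) ∧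
    (∫ t in a..b, ((r' t) ^ 2 / 2 + (r t) ^ 2 * q t / 2 + W t / (r t) ^ α)) ≤
      Real.sqrt (2 * W b) / ((2 - α) / 2) * (r b) ^ ((2 - α) / 2) -
        (1 / ((2 - α) / 2)) * (r a * r' a) := by
  obtain ⟨hα0, hα2⟩ := hα
  have hab' : Set.uIcc a b = Set.Icc a b := Set.uIcc_of_le hab.le
  set s : ℝ := (2 - α) / 2 with hs
  have hspos : 0 < s := by rw [hs]; linarith
  have ha : a ∈ Set.Icc a b := ⟨le_refl a, hab.le⟩
  have hb : b ∈ Set.Icc a b := ⟨hab.le, le_refl b⟩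
  have hra : 0 < r a := hrpos a ha
  have hrb : 0 < r b := hrpos b hb
  set F' : ℝ → ℝ := fun t => r' t ^ 2 + r t * r'' t with hF'
  have hFd : ∀ t ∈ Set.Icc a b, HasDerivAt (fun t => r t * r' t) (F' t) t := by
    intro t ht
    have h := (hr t ht).mul (hr' t ht)
    exact h.congr_deriv (by rw [hF']; ring)
  have haux : ∀ t ∈ Set.Icc a b,
      r t * r'' t = -(α / 2) * r' t ^ 2 + s * q t * r t ^ 2 := by
    intro t ht
    have hrt := (hrpos t ht).ne'
    rw [hode t ht]
    field_simp
  have hF'eq : ∀ t ∈ Set.Icc a b, F' t = 2 * s * (W t / r t ^ α) := by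
    intro t ht
    simp only [hF']
    rw [haux t ht, ← henergy t ht, hs]
    ring
  have hF'nn : ∀ t ∈ Set.Icc a b, 0 ≤ F' t := by
    intro t ht
    rw [hF'eq t ht]
    have : 0 < r t ^ α := Real.rpow_pos_of_pos (hrpos t ht) α
    have hWt : 0 < W t := lt_of_lt_of_le hVmin (hW t ht)
    positivity
  have hint : IntervalIntegrable F' MeasureTheory.volume a b := by
    apply intervalIntegrable_deriv_of_nonneg
    · rw [hab']
      exact fun t ht => ((hr t ht).mul (hr' t ht)).continuousAt.continuousWithinAt
    · intro x hx
      rw [min_eq_left hab.le, max_eq_right hab.le] at hx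
      exact hFd x (Set.Ioo_subset_Icc_self hx)
    · intro x hx
      rw [min_eq_left hab.le, max_eq_right hab.le] at hx
      exact hF'nn x (Set.Ioo_subset_Icc_self hx)
  have hFTC : (∫ t in a..b, F' t) = r b * r' b - r a * r' a :=
    integral_eq_sub_of_hasDerivAt (fun t ht => hFd t (hab' ▸ ht)) hint
  have hI : (∫ t in a..b, ((r' t) ^ 2 / 2 + (r t) ^ 2 * q t / 2 + W t / (r t) ^ α))
      = (1 / s) * (r b * r' b - r a * r' a) := by
    rw [← hFTC, ← integral_const_mul]
    apply integral_congr
    intro t ht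
    rw [hab'] at ht
    show r' t ^ 2 / 2 + r t ^ 2 * q t / 2 + W t / r t ^ α = 1 / s * F' t
    rw [hF'eq t ht]
    have h2 := henergy t ht
    have : (1 / s) * (2 * s * (W t / r t ^ α)) = 2 * (W t / r t ^ α) := by
      rw [show (1:ℝ) / s * (2 * s * (W t / r t ^ α)) = s / s * (2 * (W t / r t ^ α)) by ring,
        div_self hspos.ne', one_mul]
    rw [this]
    linarith
  -- basic positivity facts
  have hr'b : 0 < r' b := hr'pos b ⟨hab, le_refl b⟩
  have hG0 : 0 ≤ r b * r' b := mul_nonneg hrb.le hr'b.le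
  set P : ℝ := r b ^ s with hP
  set Q : ℝ := r a ^ s with hQ
  have hPpos : 0 < P := Real.rpow_pos_of_pos hrb s
  have hQpos : 0 < Q := Real.rpow_pos_of_pos hra s
  have hPQ : Q < P := Real.rpow_lt_rpow hra.le hrab hspos
  have hP2 : r b ^ ((2:ℝ) - α) = P * P := by
    rw [hP, ← Real.rpow_add hrb]; congr 1; rw [hs]; ring
  have hQ2 : r a ^ ((2:ℝ) - α) = Q * Q := by
    rw [hQ, ← Real.rpow_add hra]; congr 1; rw [hs]; ring
  have hQ2' : r a ^ (2 * s) = Q * Q := by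
    rw [hQ, ← Real.rpow_add hra]; congr 1; ring
  -- Upper bound on r b * r' b
  have hWb : 0 < W b := lt_of_lt_of_le hVmin (hW b hb)
  have hdiv : (r b : ℝ) ^ (2:ℕ) / r b ^ α = P * P := by
    rw [← hP2, ← Real.rpow_natCast (r b) 2, ← Real.rpow_sub hrb]
    norm_num
  have hG2 : (r b * r' b) ^ 2 ≤ 2 * W b * (P * P) := by
    have hEb := henergy b hb
    have hqb := hq b hb
    have h1 : (r' b) ^ 2 ≤ 2 * (W b / r b ^ α) := by
      nlinarith [mul_nonneg (sq_nonneg (r b)) hqb]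
    have h2 : (r b * r' b) ^ 2 = (r b) ^ 2 * (r' b) ^ 2 := by ring
    have h3 : (r b) ^ 2 * (2 * (W b / r b ^ α)) = 2 * W b * ((r b) ^ (2:ℕ) / r b ^ α) := by
      ring
    rw [h2]
    calc (r b) ^ 2 * (r' b) ^ 2 ≤ (r b) ^ 2 * (2 * (W b / r b ^ α)) := by
          apply mul_le_mul_of_nonneg_left h1 (sq_nonneg _)
      _ = 2 * W b * (P * P) := by rw [h3, hdiv]
  have hup : r b * r' b ≤ Real.sqrt (2 * W b) * P := by
    have h2 : r b * r' b = Real.sqrt ((r b * r' b) ^ 2) := (Real.sqrt_sq hG0).symm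
    have h3 : Real.sqrt (2 * W b * (P * P)) = Real.sqrt (2 * W b) * P := by
      rw [show 2 * W b * (P * P) = (2 * W b) * P ^ 2 by ring,
        Real.sqrt_mul (by positivity) (P ^ 2), Real.sqrt_sq hPpos.le]
    rw [h2, ← h3]
    exact Real.sqrt_le_sqrt hG2
  -- Monotone function φ for the lower bound
  set φ : ℝ → ℝ := fun t => (r t * r' t) ^ 2 / 2 - Vmin * r t ^ ((2:ℝ) - α) with hφ
  set φ' : ℝ → ℝ := fun t =>
    (r t * r' t) * F' t - Vmin * (r' t * ((2 - α) * r t ^ ((2:ℝ) - α - 1))) with hφ'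
  have hφd : ∀ t ∈ Set.Icc a b, HasDerivAt φ (φ' t) t := by
    intro t ht
    have h1 : HasDerivAt (fun x => (r x * r' x) ^ 2 / 2)
        ((2 : ℕ) * (r t * r' t) ^ (2 - 1) * F' t / 2) t := ((hFd t ht).pow 2).div_const 2
    have h2 : HasDerivAt (fun x => Vmin * r x ^ ((2:ℝ) - α))
        (Vmin * (r' t * ((2:ℝ) - α) * r t ^ ((2:ℝ) - α - 1))) t :=
      ((hr t ht).rpow_const (Or.inl (hrpos t ht).ne')).const_mul Vmin
    have := h1.sub h2
    exact this.congr_deriv (by rw [hφ']; push_cast; ring)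
  have hmono : MonotoneOn φ (Set.Icc a b) := by
    apply monotoneOn_of_deriv_nonneg (convex_Icc a b)
    · exact fun t ht => (hφd t ht).continuousAt.continuousWithinAt
    · rw [interior_Icc]
      exact fun t ht => ((hφd t (Set.Ioo_subset_Icc_self ht)).differentiableAt).differentiableWithinAt
    · rw [interior_Icc]
      intro x hx
      have hxI : x ∈ Set.Icc a b := Set.Ioo_subset_Icc_self hx
      rw [(hφd x hxI).deriv]
      simp only [hφ']
      have hrx : 0 < r x := hrpos x hxI
      have hr'x : 0 < r' x := hr'pos x ⟨hx.1, hx.2.le⟩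
      have hpe : r x ^ ((2:ℝ) - α - 1) = r x / r x ^ α := by
        rw [show (2:ℝ) - α - 1 = 1 - α by ring, Real.rpow_sub hrx, Real.rpow_one]
      rw [hF'eq x hxI, hpe, hs]
      have hpos : 0 < r x / r x ^ α := div_pos hrx (Real.rpow_pos_of_pos hrx α)
      have hWx : Vmin ≤ W x := hW x hxI
      have key : 0 ≤ (2 - α) * r' x * (r x / r x ^ α) * (W x - Vmin) :=
        mul_nonneg (mul_nonneg (mul_nonneg (by linarith) hr'x.le) hpos.le) (by linarith)
      have heq : r x * r' x * (2 * ((2 - α) / 2) * (W x / r x ^ α)) -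
          Vmin * (r' x * ((2 - α) * (r x / r x ^ α)))
          = (2 - α) * r' x * (r x / r x ^ α) * (W x - Vmin) := by
        have h0 : r x ^ α ≠ 0 := (Real.rpow_pos_of_pos hrx α).ne'
        field_simp
      rw [heq]
      exact key
  have hφab : φ a ≤ φ b := hmono ha hb hab.le
  have hG2' : 2 * Vmin * (P * P - Q * Q) ≤ (r b * r' b) ^ 2 := by
    have := hφab
    simp only [hφ] at this
    rw [hP2, hQ2] at this
    nlinarith [sq_nonneg (r a * r' a)]
  -- lower bound on r b * r' b
  set K : ℝ := Real.sqrt (2 * Vmin) with hK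
  have hK0 : 0 < K := Real.sqrt_pos.2 (by linarith)
  have hK2 : K ^ 2 = 2 * Vmin := Real.sq_sqrt (by linarith)
  have hGlow' : K * P * P - K * Q * Q ≤ (r b * r' b) * P := by
    have hD : 0 < P * P - Q * Q := by nlinarith
    have h1 : K ^ 2 * (P * P - Q * Q) * P ^ 2 ≤ (r b * r' b) ^ 2 * P ^ 2 := by
      rw [hK2]
      exact mul_le_mul_of_nonneg_right hG2' (sq_nonneg P)
    nlinarith [mul_nonneg hG0 hPpos.le, mul_pos hK0 hD, sq_nonneg Q,
      mul_pos (mul_pos (mul_pos hK0 hK0) hD) (mul_pos hQpos hQpos)]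
  have hGlow : K * P - K * (Q * Q) / P ≤ r b * r' b := by
    have hkey : (K * P - K * (Q * Q) / P) * P = K * P * P - K * Q * Q := by
      field_simp
    have := hGlow'
    rw [← hkey] at this
    exact le_of_mul_le_mul_right this hPpos
  rw [hI]
  constructor
  · have hrw : K / s * P - 1 / s * (r a * r' a) - K / s * (r a ^ (2 * s) / P)
        = (1 / s) * (K * P - (r a * r' a) - K * (Q * Q) / P) := by
      rw [hQ2']; ring
    rw [hrw]
    apply mul_le_mul_of_nonneg_left _ (by positivity : (0:ℝ) ≤ 1 / s)
    linarith
  · have hrw : Real.sqrt (2 * W b) / s * P - 1 / s * (r a * r' a)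
        = (1 / s) * (Real.sqrt (2 * W b) * P - (r a * r' a)) := by ring
    rw [hrw]
    apply mul_le_mul_of_nonneg_left _ (by positivity : (0:ℝ) ≤ 1 / s)
    linarith
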